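/- Let T and B be bounded self-adjoint operators on a complex Hilbert space H. Then for every real ε: ‖exp(i(T + εB)) − exp(iT) − iε ∫₀¹ exp(i(1−u)T) B exp(iuT) du‖ ≤ ε² ‖B‖². (The quantitative Duhamel remainder estimate from the paper's proof of the differentiability of the Fourier functional calculus.) -/

import Mathlib

set_option maxHeartbeats 1000000
set_option synthInstance.maxHeartbeats 400000

open MeasureTheory

section DuhamelAux

variable {H : Type*} [NormedAddCommGroup H] [InnerProductSpace ℂ H] [CompleteSpace H]

private noncomputable instance ratNormedAlgebraCLM : NormedAlgebra ℚ (H →L[ℂ] H) :=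
  NormedAlgebra.restrictScalars ℚ ℂ (H →L[ℂ] H)

private lemma smul_I_eq (S : H →L[ℂ] H) (r : ℝ) :
    (Complex.I * (r : ℂ)) • S = r • (Complex.I • S) := by
  rw [RCLike.real_smul_eq_coe_smul (K := ℂ), smul_smul, mul_comm]; rfl

private lemma norm_exp_le_one' (S : H →L[ℂ] H) (hS : IsSelfAdjoint S) (r : ℝ) :
    ‖NormedSpace.exp (r • (Complex.I • S))‖ ≤ 1 := by
  have hskewc : (Complex.I * (r : ℂ)) ∈ skewAdjoint ℂ := by
    rw [skewAdjoint.mem_iff]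
    simp [Complex.ext_iff]
  have hskew : (Complex.I * (r : ℂ)) • S ∈ skewAdjoint (H →L[ℂ] H) :=
    hS.smul_mem_skewAdjoint hskewc
  have hu := NormedSpace.exp_mem_unitary_of_mem_skewAdjoint hskew
  rw [← smul_I_eq]
  rcases subsingleton_or_nontrivial (H →L[ℂ] H) with h | h
  · simp [Subsingleton.elim (NormedSpace.exp ((Complex.I * (r:ℂ)) • S)) (0 : H →L[ℂ] H)]
  · exact le_of_eq (CStarRing.norm_of_mem_unitary hu)

private lemma duhamel_eq (X Y : H →L[ℂ] H) :
    NormedSpace.exp X - NormedSpace.exp Y =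
      ∫ u in (0:ℝ)..1,
        NormedSpace.exp (((1:ℝ)-u) • X) * (X - Y) * NormedSpace.exp (u • Y) := by
  have hrw : (NormedSpace.exp : (H →L[ℂ] H) → (H →L[ℂ] H)) = NormedSpace.exp :=
    rfl
  rw [hrw]
  set G : ℝ → (H →L[ℂ] H) := fun u =>
    NormedSpace.exp (((1:ℝ)-u) • X) * NormedSpace.exp (u • Y) with hGdef
  have hG : ∀ u : ℝ, HasDerivAt (fun v => -G v)
      (NormedSpace.exp (((1:ℝ)-u) • X) * (X - Y) * NormedSpace.exp (u • Y)) u := by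
    intro u
    have hg : HasDerivAt (fun v : ℝ => (1:ℝ) - v) (-1) u := (hasDerivAt_id u).const_sub 1
    have h1 : HasDerivAt (fun v : ℝ => NormedSpace.exp (((1:ℝ)-v) • X))
        ((-1 : ℝ) • (NormedSpace.exp (((1:ℝ)-u) • X) * X)) u :=
      HasDerivAt.scomp u (hasDerivAt_exp_smul_const (𝕂 := ℝ) X ((1:ℝ)-u)) hg
    have h2 : HasDerivAt (fun v : ℝ => NormedSpace.exp (v • Y))
        (Y * NormedSpace.exp (u • Y)) u :=
      hasDerivAt_exp_smul_const' (𝕂 := ℝ) Y u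
    have hmul := (h1.mul h2).neg
    refine hmul.congr_deriv ?_
    simp only [neg_one_smul]
    noncomm_ring
  have hcont : Continuous fun u : ℝ =>
      NormedSpace.exp (((1:ℝ)-u) • X) * (X - Y) * NormedSpace.exp (u • Y) := by
    have c1 : Continuous fun u : ℝ => NormedSpace.exp (((1:ℝ)-u) • X) :=
      NormedSpace.exp_continuous.comp ((continuous_const.sub continuous_id).smul continuous_const)
    have c2 : Continuous fun u : ℝ => NormedSpace.exp (u • Y) :=
      NormedSpace.exp_continuous.comp (continuous_id.smul continuous_const)
    exact (c1.mul continuous_const).mul c2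
  have hFTC := intervalIntegral.integral_eq_sub_of_hasDerivAt
    (f := fun u => -G u) (fun u _ => hG u) (hcont.intervalIntegrable 0 1)
  rw [hFTC]
  simp [hGdef, NormedSpace.exp_zero]
  abel

private lemma exp_diff_norm_le (A T : H →L[ℂ] H) (hA : IsSelfAdjoint A) (hT : IsSelfAdjoint T)
    {s : ℝ} (hs0 : 0 ≤ s) (hs1 : s ≤ 1) :
    ‖NormedSpace.exp (s • (Complex.I • A)) - NormedSpace.exp (s • (Complex.I • T))‖ ≤
      s * ‖A - T‖ := by
  rw [duhamel_eq]
  have hXY : s • (Complex.I • A) - s • (Complex.I • T) = s • (Complex.I • (A - T)) := by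
    rw [← smul_sub, ← smul_sub]
  have key : ∀ u ∈ Set.uIoc (0:ℝ) 1,
      ‖NormedSpace.exp (((1:ℝ)-u) • (s • (Complex.I • A))) *
          (s • (Complex.I • A) - s • (Complex.I • T)) *
          NormedSpace.exp (u • (s • (Complex.I • T)))‖ ≤ s * ‖A - T‖ := by
    intro u _
    have e1 : ‖NormedSpace.exp (((1:ℝ)-u) • (s • (Complex.I • A)))‖ ≤ 1 := by
      rw [smul_smul]; exact norm_exp_le_one' A hA _
    have e3 : ‖NormedSpace.exp (u • (s • (Complex.I • T)))‖ ≤ 1 := by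
      rw [smul_smul]; exact norm_exp_le_one' T hT _
    have e2 : ‖s • (Complex.I • A) - s • (Complex.I • T)‖ ≤ s * ‖A - T‖ := by
      rw [hXY, norm_smul, Real.norm_eq_abs, abs_of_nonneg hs0]
      have h4 : ‖Complex.I • (A - T)‖ = ‖A - T‖ := by
        rw [norm_smul]; simp
      rw [h4]
    calc ‖NormedSpace.exp (((1:ℝ)-u) • (s • (Complex.I • A))) *
          (s • (Complex.I • A) - s • (Complex.I • T)) *
          NormedSpace.exp (u • (s • (Complex.I • T)))‖
        ≤ ‖NormedSpace.exp (((1:ℝ)-u) • (s • (Complex.I • A))) *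
            (s • (Complex.I • A) - s • (Complex.I • T))‖ *
          ‖NormedSpace.exp (u • (s • (Complex.I • T)))‖ := norm_mul_le _ _
      _ ≤ ‖NormedSpace.exp (((1:ℝ)-u) • (s • (Complex.I • A)))‖ *
            ‖s • (Complex.I • A) - s • (Complex.I • T)‖ *
          ‖NormedSpace.exp (u • (s • (Complex.I • T)))‖ :=
          mul_le_mul_of_nonneg_right (norm_mul_le _ _) (norm_nonneg _)
      _ ≤ 1 * (s * ‖A - T‖) * 1 :=
          mul_le_mul (mul_le_mul e1 e2 (norm_nonneg _) zero_le_one) e3 (norm_nonneg _)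
            (by positivity)
      _ = s * ‖A - T‖ := by ring
  have := intervalIntegral.norm_integral_le_of_norm_le_const key
  simpa using this

end DuhamelAux

/-- The quantitative Duhamel remainder estimate: for bounded self-adjoint operators `T, B`
on a complex Hilbert space and every real `ε`,
`‖exp(i(T+εB)) − exp(iT) − iε ∫₀¹ exp(i(1−u)T) B exp(iuT) du‖ ≤ ε² ‖B‖²`. -/
theorem duhamel_remainder_estimate
    {H : Type*} [NormedAddCommGroup H] [InnerProductSpace ℂ H] [CompleteSpace H]
    (T B : H →L[ℂ] H) (hT : IsSelfAdjoint T) (hB : IsSelfAdjoint B) (ε : ℝ) :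
    ‖NormedSpace.exp (Complex.I • (T + ε • B)) - NormedSpace.exp (Complex.I • T) -
        (Complex.I * (ε : ℂ)) •
          ∫ u in Set.Icc (0:ℝ) 1,
            NormedSpace.exp ((Complex.I * ((1 - u : ℝ) : ℂ)) • T) * B *
              NormedSpace.exp ((Complex.I * ((u : ℝ) : ℂ)) • T)‖ ≤
      ε ^ 2 * ‖B‖ ^ 2 := by
  set A : H →L[ℂ] H := T + ε • B with hAdef
  have hεB : IsSelfAdjoint (ε • B) := by
    have h := IsSelfAdjoint.smul (Complex.conj_ofReal ε) hB
    rw [RCLike.real_smul_eq_coe_smul (K := ℂ)]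
    exact h
  have hA : IsSelfAdjoint A := hT.add hεB
  -- continuity facts
  have cexp : ∀ (M : H →L[ℂ] H), Continuous fun u : ℝ => NormedSpace.exp (((1:ℝ)-u) • M) := by
    intro M
    exact NormedSpace.exp_continuous.comp
      ((continuous_const.sub continuous_id).smul continuous_const)
  have cexp' : ∀ (M : H →L[ℂ] H), Continuous fun u : ℝ => NormedSpace.exp (u • M) := by
    intro M
    exact NormedSpace.exp_continuous.comp (continuous_id.smul continuous_const)
  have cP : Continuous fun u : ℝ =>
      NormedSpace.exp (((1:ℝ)-u) • (Complex.I • A)) * B *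
        NormedSpace.exp (u • (Complex.I • T)) :=
    ((cexp _).mul continuous_const).mul (cexp' _)
  have cQ : Continuous fun u : ℝ =>
      NormedSpace.exp (((1:ℝ)-u) • (Complex.I • T)) * B *
        NormedSpace.exp (u • (Complex.I • T)) :=
    ((cexp _).mul continuous_const).mul (cexp' _)
  -- rewrite the Icc integral as an interval integral Q
  have hIcc : (∫ u in Set.Icc (0:ℝ) 1,
        NormedSpace.exp ((Complex.I * ((1 - u : ℝ) : ℂ)) • T) * B *
          NormedSpace.exp ((Complex.I * ((u : ℝ) : ℂ)) • T)) =
      ∫ u in (0:ℝ)..1,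
        NormedSpace.exp (((1:ℝ)-u) • (Complex.I • T)) * B *
          NormedSpace.exp (u • (Complex.I • T)) := by
    rw [intervalIntegral.integral_of_le (zero_le_one), ← integral_Icc_eq_integral_Ioc]
    congr 1
    ext u
    rw [smul_I_eq, smul_I_eq]
  rw [hIcc]
  -- Duhamel for A vs T
  have hXY : Complex.I • A - Complex.I • T = (Complex.I * (ε : ℂ)) • B := by
    rw [hAdef, smul_add, add_sub_cancel_left, smul_I_eq, smul_comm]
  have hD := duhamel_eq (Complex.I • A) (Complex.I • T)
  rw [hXY] at hD
  have hDP : NormedSpace.exp (Complex.I • A) - NormedSpace.exp (Complex.I • T) =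
      (Complex.I * (ε : ℂ)) • ∫ u in (0:ℝ)..1,
        NormedSpace.exp (((1:ℝ)-u) • (Complex.I • A)) * B *
          NormedSpace.exp (u • (Complex.I • T)) := by
    rw [hD, ← intervalIntegral.integral_smul]
    congr 1
    ext u
    rw [mul_smul_comm, smul_mul_assoc]
  rw [show Complex.I • (T + ε • B) = Complex.I • A from rfl, hDP, ← smul_sub,
    ← intervalIntegral.integral_sub (cP.intervalIntegrable 0 1) (cQ.intervalIntegrable 0 1)]
  rw [norm_smul]
  have hnormc : ‖Complex.I * (ε : ℂ)‖ = |ε| := by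
    simp [norm_mul]
  rw [hnormc]
  -- bound the integral
  have key : ∀ u ∈ Set.uIoc (0:ℝ) 1,
      ‖NormedSpace.exp (((1:ℝ)-u) • (Complex.I • A)) * B *
          NormedSpace.exp (u • (Complex.I • T)) -
        NormedSpace.exp (((1:ℝ)-u) • (Complex.I • T)) * B *
          NormedSpace.exp (u • (Complex.I • T))‖ ≤ |ε| * ‖B‖ ^ 2 := by
    intro u hu
    rw [Set.uIoc_of_le (zero_le_one)] at hu
    have hu0 : 0 ≤ (1:ℝ) - u := by linarith [hu.2]
    have hu1 : (1:ℝ) - u ≤ 1 := by linarith [hu.1]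
    have hdiff := exp_diff_norm_le A T hA hT hu0 hu1
    have hAT : A - T = ε • B := by rw [hAdef]; abel
    rw [hAT, norm_smul, Real.norm_eq_abs] at hdiff
    have hdiff' : ‖NormedSpace.exp (((1:ℝ)-u) • (Complex.I • A)) -
        NormedSpace.exp (((1:ℝ)-u) • (Complex.I • T))‖ ≤ |ε| * ‖B‖ := by
      refine hdiff.trans ?_
      have : ((1:ℝ)-u) * (|ε| * ‖B‖) ≤ 1 * (|ε| * ‖B‖) :=
        mul_le_mul_of_nonneg_right hu1 (by positivity)
      linarith
    have e3 : ‖NormedSpace.exp (u • (Complex.I • T))‖ ≤ 1 := norm_exp_le_one' T hT u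
    rw [← sub_mul, ← sub_mul]
    calc ‖(NormedSpace.exp (((1:ℝ)-u) • (Complex.I • A)) -
            NormedSpace.exp (((1:ℝ)-u) • (Complex.I • T))) * B *
          NormedSpace.exp (u • (Complex.I • T))‖
        ≤ ‖(NormedSpace.exp (((1:ℝ)-u) • (Complex.I • A)) -
            NormedSpace.exp (((1:ℝ)-u) • (Complex.I • T))) * B‖ *
          ‖NormedSpace.exp (u • (Complex.I • T))‖ := norm_mul_le _ _
      _ ≤ ‖NormedSpace.exp (((1:ℝ)-u) • (Complex.I • A)) -
            NormedSpace.exp (((1:ℝ)-u) • (Complex.I • T))‖ * ‖B‖ *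
          ‖NormedSpace.exp (u • (Complex.I • T))‖ :=
          mul_le_mul_of_nonneg_right (norm_mul_le _ _) (norm_nonneg _)
      _ ≤ (|ε| * ‖B‖) * ‖B‖ * 1 :=
          mul_le_mul (mul_le_mul_of_nonneg_right hdiff' (norm_nonneg _)) e3 (norm_nonneg _)
            (by positivity)
      _ = |ε| * ‖B‖ ^ 2 := by ring
  have hint := intervalIntegral.norm_integral_le_of_norm_le_const key
  calc |ε| * ‖∫ u in (0:ℝ)..1,
        (NormedSpace.exp (((1:ℝ)-u) • (Complex.I • A)) * B *
          NormedSpace.exp (u • (Complex.I • T)) -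
        NormedSpace.exp (((1:ℝ)-u) • (Complex.I • T)) * B *
          NormedSpace.exp (u • (Complex.I • T)))‖
      ≤ |ε| * (|ε| * ‖B‖ ^ 2 * |1 - 0|) := by gcongr
    _ = ε ^ 2 * ‖B‖ ^ 2 := by
        have h9 : |(1:ℝ) - 0| = 1 := by norm_num
        rw [h9, mul_one, ← mul_assoc, abs_mul_abs_self, ← sq]
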